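/- The AoI forecast vector defined by a_{k+l|k} = a_k + l for l = 1,…,k_τ and a_{k+l|k} = l − k_f + 1 for l > k_τ (with 1 ≤ k_f ≤ k_τ) dominates the true AoI: if the actual transmission succeeds at some time k + m with k_f ≤ m ≤ k_τ (and at no earlier time), then the true AoI satisfies a_{k+l} ≤ a_{k+l|k} for all l ≥ 1. -/
import Mathlib


/-- Robustness of the AoI forecast: if the actual (first) transmission success
occurs at step `m` with `k_f ≤ m ≤ k_τ`, then the true AoI is dominated by the
forecast `a_{k+l|k} = a_k + l` for `l ≤ k_τ` and `a_{k+l|k} = l - k_f + 1`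
for `l > k_τ`. -/
theorem stmt_11 (a b : ℕ → ℕ) (kf kτ m : ℕ)
    (hb : ∀ l, b l ≤ 1)
    (ha0 : 1 ≤ a 0)
    (hrec : ∀ l, a (l + 1) = 1 + a l * (1 - b l))
    (hkf : 1 ≤ kf) (hm1 : kf ≤ m) (hm2 : m ≤ kτ)
    (hsucc : b m = 1) (hearly : ∀ l < m, b l = 0) :
    ∀ l, 1 ≤ l → a l ≤ (if l ≤ kτ then a 0 + l else l - kf + 1) := by
  have hgrow : ∀ l, a (l + 1) ≤ 1 + a l := by
    intro l
    rw [hrec l]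
    have : a l * (1 - b l) ≤ a l * 1 := Nat.mul_le_mul_left _ (Nat.sub_le 1 (b l))
    simp at this
    omega
  have hbound : ∀ l, a l ≤ a 0 + l := by
    intro l
    induction l with
    | zero => omega
    | succ n ih => have := hgrow n; omega
  have hafter : ∀ l, m + 1 ≤ l → a l ≤ l - m := by
    intro l hl
    induction l with
    | zero => omega
    | succ n ih =>
      rcases Nat.lt_or_ge m n with h | h
      · have := hgrow n
        have := ih (by omega)
        omega
      · have hn : n = m := by omega
        subst hn
        rw [hrec n, hsucc]
        simp
  intro l hl
  split_ifs with h
  · rcases Nat.lt_or_ge m l with h2 | h2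
    · have := hafter l (by omega)
      omega
    · exact hbound l
  · have := hafter l (by omega)
    omega
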